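/- Let K be an algebraically closed field and let s, r ∈ K with s ≠ 0, r ≠ 0, s² ≠ 1, r² ≠ 1. Set t = diag(s, s⁻¹), t' = diag(r, r⁻¹) ∈ SL₂(K), Δ = s − s⁻¹, and for α ∈ K set X_α = [[s + αΔ, −αΔ],[(1+α)Δ, s⁻¹ − αΔ]] ∈ SL₂(K). Then for all X, Y ∈ SL₂(K) such that X is SL₂(K)-conjugate to t and Y is SL₂(K)-conjugate to t', there exists A ∈ SL₂(K) with A⁻¹ Y A = t' and A⁻¹ X A belonging to the set {X_α : α ∈ K} ∪ {[[s, Δ],[0, s⁻¹]], [[s⁻¹, 0],[Δ, s]], diag(s, s⁻¹), diag(s⁻¹, s)}. -/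

import Mathlib

open Matrix

/-- `diag(s, s⁻¹) ∈ SL₂(K)` for `s ≠ 0`. -/
def diagSL {K : Type*} [Field K] (s : K) (hs : s ≠ 0) : SpecialLinearGroup (Fin 2) K :=
  ⟨!![s, 0; 0, s⁻¹], by rw [Matrix.det_fin_two_of]; field_simp; ring⟩

/-- `X_α = [[s + αΔ, -αΔ],[(1+α)Δ, s⁻¹ - αΔ]] ∈ SL₂(K)` where `Δ = s - s⁻¹`. -/
def Xa {K : Type*} [Field K] (s : K) (hs : s ≠ 0) (α : K) :
    SpecialLinearGroup (Fin 2) K :=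
  ⟨!![s + α * (s - s⁻¹), -(α * (s - s⁻¹));
      (1 + α) * (s - s⁻¹), s⁻¹ - α * (s - s⁻¹)], by
    rw [Matrix.det_fin_two_of]; field_simp; ring⟩

/-- `[[s, Δ],[0, s⁻¹]] ∈ SL₂(K)` where `Δ = s - s⁻¹`. -/
def upSL {K : Type*} [Field K] (s : K) (hs : s ≠ 0) : SpecialLinearGroup (Fin 2) K :=
  ⟨!![s, s - s⁻¹; 0, s⁻¹], by rw [Matrix.det_fin_two_of]; field_simp; ring⟩

/-- `[[s⁻¹, 0],[Δ, s]] ∈ SL₂(K)` where `Δ = s - s⁻¹`. -/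
def lowSL {K : Type*} [Field K] (s : K) (hs : s ≠ 0) : SpecialLinearGroup (Fin 2) K :=
  ⟨!![s⁻¹, 0; s - s⁻¹, s], by rw [Matrix.det_fin_two_of]; field_simp; ring⟩

/-- `diag(s⁻¹, s) ∈ SL₂(K)` for `s ≠ 0`. -/
def diagSL' {K : Type*} [Field K] (s : K) (hs : s ≠ 0) : SpecialLinearGroup (Fin 2) K :=
  ⟨!![s⁻¹, 0; 0, s], by rw [Matrix.det_fin_two_of]; field_simp; ring⟩

lemma diag_comm {K : Type*} [Field K] (l r : K) (hl : l ≠ 0) (hr : r ≠ 0) :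
    diagSL l hl * diagSL r hr = diagSL r hr * diagSL l hl := by
  apply Subtype.ext
  simp [diagSL]
  ext i j
  fin_cases i <;> fin_cases j <;> simp [Matrix.SpecialLinearGroup.coe_mul, Matrix.mul_apply, Fin.sum_univ_two] <;> erw [Matrix.SpecialLinearGroup.coe_mul, Matrix.SpecialLinearGroup.coe_mul] <;> simp [Matrix.mul_apply, Fin.sum_univ_two] <;> ring

lemma conj_helper {K : Type*} [Field K]
    (B D X Y t' g : SpecialLinearGroup (Fin 2) K)
    (hY : Y = B * t' * B⁻¹) (hcomm : D * t' = t' * D)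
    (hM : ((B⁻¹ * X * B : SpecialLinearGroup (Fin 2) K) : Matrix (Fin 2) (Fin 2) K)
        * (D : Matrix (Fin 2) (Fin 2) K)
        = (D : Matrix (Fin 2) (Fin 2) K) * (g : Matrix (Fin 2) (Fin 2) K)) :
    (B * D)⁻¹ * Y * (B * D) = t' ∧ (B * D)⁻¹ * X * (B * D) = g := by
  have hM' : (B⁻¹ * X * B) * D = D * g := Subtype.ext (by simpa using hM)
  constructor
  · calc (B * D)⁻¹ * Y * (B * D) = D⁻¹ * t' * D := by rw [hY]; group
      _ = D⁻¹ * (D * t') := by rw [hcomm, mul_assoc]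
      _ = t' := by group
  · calc (B * D)⁻¹ * X * (B * D) = D⁻¹ * ((B⁻¹ * X * B) * D) := by group
      _ = D⁻¹ * (D * g) := by rw [hM']
      _ = g := by group

lemma trace_conj {K : Type*} [Field K] (E t : SpecialLinearGroup (Fin 2) K) :
    ((E * t * E⁻¹ : SpecialLinearGroup (Fin 2) K) : Matrix (Fin 2) (Fin 2) K).trace
      = (t : Matrix (Fin 2) (Fin 2) K).trace := by
  rw [Matrix.SpecialLinearGroup.coe_mul, Matrix.SpecialLinearGroup.coe_mul, Matrix.trace_mul_comm,
    ← Matrix.mul_assoc, ← Matrix.SpecialLinearGroup.coe_mul, inv_mul_cancel]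
  simp


/-- Every pair `(X, Y)` with `X ∼ t`, `Y ∼ t'` can be simultaneously conjugated so that
`Y` becomes `t'` and `X` becomes one of the listed representatives. -/
theorem pair_conj_to_representative {K : Type*} [Field K] [IsAlgClosed K]
    (s r : K) (hs : s ≠ 0) (hr : r ≠ 0) (hs2 : s ^ 2 ≠ 1) (hr2 : r ^ 2 ≠ 1)
    (X Y : SpecialLinearGroup (Fin 2) K)
    (hX : ∃ A : SpecialLinearGroup (Fin 2) K, X = A * diagSL s hs * A⁻¹)
    (hY : ∃ A : SpecialLinearGroup (Fin 2) K, Y = A * diagSL r hr * A⁻¹) :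
    ∃ A : SpecialLinearGroup (Fin 2) K,
      A⁻¹ * Y * A = diagSL r hr ∧
      A⁻¹ * X * A ∈
        ({g | ∃ α : K, g = Xa s hs α} ∪
          {upSL s hs, lowSL s hs, diagSL s hs, diagSL' s hs} :
          Set (SpecialLinearGroup (Fin 2) K)) := by
  obtain ⟨C, hC⟩ := hX
  obtain ⟨B, hB⟩ := hY
  set M : SpecialLinearGroup (Fin 2) K := B⁻¹ * X * B with hMdef
  have hss : s * s⁻¹ = 1 := mul_inv_cancel₀ hs
  have hΔ : s - s⁻¹ ≠ 0 := by
    intro h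
    apply hs2
    rw [sub_eq_zero] at h
    rw [sq]; nth_rewrite 2 [h]; exact hss
  set a : K := (M : Matrix (Fin 2) (Fin 2) K) 0 0 with ha_def
  set b : K := (M : Matrix (Fin 2) (Fin 2) K) 0 1 with hb_def
  set c : K := (M : Matrix (Fin 2) (Fin 2) K) 1 0 with hc_def
  set d : K := (M : Matrix (Fin 2) (Fin 2) K) 1 1 with hd_def
  have hMeta : (M : Matrix (Fin 2) (Fin 2) K) = !![a, b; c, d] :=
    Matrix.eta_fin_two _
  have htr : a + d = s + s⁻¹ := by
    have h1 : M = (B⁻¹ * C) * diagSL s hs * (B⁻¹ * C)⁻¹ := by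
      rw [hMdef, hC]; group
    have h2 := trace_conj (B⁻¹ * C) (diagSL s hs)
    rw [← h1] at h2
    simpa [Matrix.trace_fin_two, diagSL] using h2
  have hdet : a * d - b * c = 1 := by
    have := M.2
    rw [Matrix.det_fin_two] at this
    exact this
  have hd' : d = s + s⁻¹ - a := by linear_combination htr
  have hquad : (a - s) * (a - s⁻¹) = -(b * c) := by
    linear_combination hss - hdet + a * htr
  rcases eq_or_ne b 0 with hb | hb
  · -- b = 0
    have hq0 : (a - s) * (a - s⁻¹) = 0 := by rw [hquad, hb]; ring
    rcases mul_eq_zero.mp hq0 with ha | ha <;> rw [sub_eq_zero] at ha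
    · -- a = s
      have hdd : d = s⁻¹ := by rw [hd', ha]; ring
      rcases eq_or_ne c 0 with hc | hc
      · -- diagonal: diagSL
        obtain ⟨h1, h2⟩ := conj_helper B (diagSL 1 one_ne_zero) X Y (diagSL r hr)
          (diagSL s hs) hB (diag_comm _ _ _ _) (by
            rw [← hMdef, hMeta, ha, hdd, hb, hc]
            ext i j
            fin_cases i <;> fin_cases j <;>
              simp [diagSL, Matrix.mul_apply, Fin.sum_univ_two] <;>
              (try field_simp) <;> (try ring1))
        exact ⟨_, h1, by rw [h2]; apply Set.mem_union_right; simp⟩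
      · -- Xa 0
        obtain ⟨l, hl⟩ := IsAlgClosed.exists_pow_nat_eq ((s - s⁻¹) / c) (n := 2) (by norm_num)
        have hlc : c * l ^ 2 = s - s⁻¹ := by rw [hl]; field_simp
        have hl0 : l ≠ 0 := by rintro rfl; rw [zero_pow (by norm_num), mul_zero] at hlc; exact hΔ hlc.symm
        obtain ⟨h1, h2⟩ := conj_helper B (diagSL l hl0) X Y (diagSL r hr)
          (Xa s hs 0) hB (diag_comm _ _ _ _) (by
            rw [← hMdef, hMeta, ha, hdd, hb]
            ext i j
            fin_cases i <;> fin_cases j <;>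
              simp [diagSL, Xa, Matrix.mul_apply, Fin.sum_univ_two] <;>
              (try field_simp) <;>
              first
                | ring1
                | linear_combination s * hlc - hss)
        exact ⟨_, h1, by rw [h2]; apply Set.mem_union_left; exact ⟨0, rfl⟩⟩
    · -- a = s⁻¹
      have hdd : d = s := by rw [hd', ha]; ring
      rcases eq_or_ne c 0 with hc | hc
      · -- diagonal: diagSL'
        obtain ⟨h1, h2⟩ := conj_helper B (diagSL 1 one_ne_zero) X Y (diagSL r hr)
          (diagSL' s hs) hB (diag_comm _ _ _ _) (by
            rw [← hMdef, hMeta, ha, hdd, hb, hc]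
            ext i j
            fin_cases i <;> fin_cases j <;>
              simp [diagSL, diagSL', Matrix.mul_apply, Fin.sum_univ_two] <;>
              (try field_simp) <;> (try ring1))
        exact ⟨_, h1, by rw [h2]; apply Set.mem_union_right; simp⟩
      · -- lowSL
        obtain ⟨l, hl⟩ := IsAlgClosed.exists_pow_nat_eq ((s - s⁻¹) / c) (n := 2) (by norm_num)
        have hlc : c * l ^ 2 = s - s⁻¹ := by rw [hl]; field_simp
        have hl0 : l ≠ 0 := by rintro rfl; rw [zero_pow (by norm_num), mul_zero] at hlc; exact hΔ hlc.symm
        obtain ⟨h1, h2⟩ := conj_helper B (diagSL l hl0) X Y (diagSL r hr)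
          (lowSL s hs) hB (diag_comm _ _ _ _) (by
            rw [← hMdef, hMeta, ha, hdd, hb]
            ext i j
            fin_cases i <;> fin_cases j <;>
              simp [diagSL, lowSL, Matrix.mul_apply, Fin.sum_univ_two] <;>
              (try field_simp) <;>
              first
                | ring1
                | linear_combination s * hlc - hss)
        exact ⟨_, h1, by rw [h2]; apply Set.mem_union_right; simp⟩
  · -- b ≠ 0
    rcases eq_or_ne a s with ha | ha
    · -- a = s, so c = 0, upSL
      have hdd : d = s⁻¹ := by rw [hd', ha]; ring
      have hc : c = 0 := by
        have hbc : b * c = 0 := by linear_combination hquad - (a - s⁻¹) * ha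
        exact (mul_eq_zero.mp hbc).resolve_left hb
      obtain ⟨l, hl⟩ := IsAlgClosed.exists_pow_nat_eq (b / (s - s⁻¹)) (n := 2) (by norm_num)
      have hlb : l ^ 2 * (s - s⁻¹) = b := (eq_div_iff hΔ).mp hl
      have hl0 : l ≠ 0 := by rintro rfl; rw [zero_pow (by norm_num), zero_mul] at hlb; exact hb hlb.symm
      obtain ⟨h1, h2⟩ := conj_helper B (diagSL l hl0) X Y (diagSL r hr)
        (upSL s hs) hB (diag_comm _ _ _ _) (by
          rw [← hMdef, hMeta, ha, hdd, hc]
          ext i j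
          fin_cases i <;> fin_cases j <;>
            simp [diagSL, upSL, Matrix.mul_apply, Fin.sum_univ_two] <;>
            (try field_simp) <;>
            first
              | ring1
              | linear_combination -s * hlb - l ^ 2 * hss)
      exact ⟨_, h1, by rw [h2]; apply Set.mem_union_right; simp⟩
    · -- a ≠ s : Xa α
      have hsa : s - a ≠ 0 := sub_ne_zero.mpr (Ne.symm ha)
      obtain ⟨l, hl⟩ := IsAlgClosed.exists_pow_nat_eq (b / (s - a)) (n := 2) (by norm_num)
      have hlb : l ^ 2 * (s - a) = b := (eq_div_iff hsa).mp hl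
      have hl0 : l ≠ 0 := by rintro rfl; rw [zero_pow (by norm_num), zero_mul] at hlb; exact hb hlb.symm
      have hll : l * l⁻¹ = 1 := mul_inv_cancel₀ hl0
      obtain ⟨α, hα⟩ : ∃ α : K, α * (s - s⁻¹) = a - s :=
        ⟨(a - s) / (s - s⁻¹), div_mul_cancel₀ _ hΔ⟩
      have hcl' : (s - a) * (c * l ^ 2) = (s - a) * (a - s⁻¹) := by
        linear_combination c * hlb + hquad
      have hcl2 : c * l ^ 2 = a - s⁻¹ := mul_left_cancel₀ hsa hcl'
      obtain ⟨h1, h2⟩ := conj_helper B (diagSL l hl0) X Y (diagSL r hr)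
        (Xa s hs α) hB (diag_comm _ _ _ _) (by
          rw [← hMdef, hMeta]
          ext i j
          fin_cases i <;> fin_cases j <;>
            simp [diagSL, Xa, Matrix.mul_apply, Fin.sum_univ_two] <;>
            first
              | linear_combination (-l) * hα
              | linear_combination (-(l⁻¹)) * hlb + l * hα + l * (s - a) * hll
              | linear_combination (-(l⁻¹)) * hα + l⁻¹ * hcl2 - c * l * hll
              | linear_combination l⁻¹ * hα + l⁻¹ * hd'
              | ring1)
      exact ⟨_, h1, by rw [h2]; apply Set.mem_union_left; exact ⟨_, rfl⟩⟩
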